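/- Let M = [[m₁₁, m₁₂],[m₁₂, m₂₂]] be a positive definite 2×2 integer matrix different from the identity matrix. Then there exist a prime p ≤ m₁₁·m₂₂ and an integer C with 2 ≤ C ≤ γ_p (where γ_p is the least quadratic non-residue mod p, with γ₂ := 7) such that every positive semidefinite integer 3×3 matrix of block form [[M, v],[vᵀ, C·m₁₁]] is in fact positive definite. -/

import Mathlib

/-- The least positive quadratic non-residue modulo `p` for an odd prime `p`, with the
convention `γ₂ = 7`. -/
noncomputable def leastNonRes (p : ℕ) : ℕ :=
  if p = 2 then 7 else sInf {n : ℕ | ¬ IsSquare ((n : ZMod p))}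


/-- Descent: if every integer solution of `v² + f t² = C m²` has all of `v,t,m`
divisible by `q ≥ 2`, then every solution has `m = 0`. -/
lemma descent_aux (q : ℕ) (hq : 2 ≤ q) {f C : ℤ}
    (hstep : ∀ v t m : ℤ, v ^ 2 + f * t ^ 2 = C * m ^ 2 →
      (q : ℤ) ∣ v ∧ (q : ℤ) ∣ t ∧ (q : ℤ) ∣ m) :
    ∀ v t m : ℤ, v ^ 2 + f * t ^ 2 = C * m ^ 2 → m = 0 := by
  have hq0 : (q : ℤ) ≠ 0 := by positivity
  suffices H : ∀ n : ℕ, ∀ v t m : ℤ, m.natAbs = n → v ^ 2 + f * t ^ 2 = C * m ^ 2 → m = 0 by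
    exact fun v t m h => H m.natAbs v t m rfl h
  intro n
  induction n using Nat.strong_induction_on with
  | _ n ih =>
    intro v t m hn h
    rcases eq_or_ne m 0 with hm | hm
    · exact hm
    obtain ⟨hv, ht, hmm⟩ := hstep v t m h
    obtain ⟨v', rfl⟩ := hv
    obtain ⟨t', rfl⟩ := ht
    obtain ⟨m', rfl⟩ := hmm
    have h' : v' ^ 2 + f * t' ^ 2 = C * m' ^ 2 := by
      have hq2 : ((q : ℤ)) ^ 2 ≠ 0 := pow_ne_zero _ hq0
      have h2 : (q:ℤ)^2 * (v' ^ 2 + f * t' ^ 2) = (q:ℤ)^2 * (C * m' ^ 2) := by ring_nf; ring_nf at h; linarith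
      exact mul_left_cancel₀ hq2 h2
    have hm' : m' ≠ 0 := by
      intro h0; exact hm (by rw [h0, mul_zero])
    have hlt : m'.natAbs < n := by
      subst hn
      rw [Int.natAbs_mul, Int.natAbs_natCast]
      have : 1 ≤ m'.natAbs := Int.natAbs_pos.mpr hm'
      calc m'.natAbs < 2 * m'.natAbs := by omega
        _ ≤ q * m'.natAbs := by exact Nat.mul_le_mul_right _ hq
    exact absurd (ih _ hlt v' t' m' rfl h') hm'

lemma stepA (q : ℕ) (hq : q.Prime) {f C : ℤ} (hC : ¬ IsSquare ((C : ZMod q)))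
    (hqf : (q : ℤ) ∣ f) (hq2f : ¬ ((q : ℤ) * q ∣ f)) :
    ∀ v t m : ℤ, v ^ 2 + f * t ^ 2 = C * m ^ 2 →
      (q : ℤ) ∣ v ∧ (q : ℤ) ∣ t ∧ (q : ℤ) ∣ m := by
  haveI : Fact q.Prime := ⟨hq⟩
  have hqp : Prime (q : ℤ) := Nat.prime_iff_prime_int.mp hq
  intro v t m h
  have hz : ((v : ZMod q)) ^ 2 = (C : ZMod q) * (m : ZMod q) ^ 2 := by
    have := congrArg (fun z : ℤ => (z : ZMod q)) h
    push_cast at this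
    have hf0 : ((f : ZMod q)) = 0 := by
      rwa [ZMod.intCast_zmod_eq_zero_iff_dvd]
    rw [hf0] at this
    ring_nf at this ⊢
    linear_combination this
  have hm : ((m : ZMod q)) = 0 := by
    by_contra hm0
    apply hC
    set vq : ZMod q := (v : ZMod q) with hvq
    set mq : ZMod q := (m : ZMod q) with hmq
    have h2 : mq * mq⁻¹ = 1 := mul_inv_cancel₀ hm0
    refine ⟨vq * mq⁻¹, ?_⟩
    calc (C : ZMod q) = C * ((mq * mq⁻¹) * (mq * mq⁻¹)) := by rw [h2]; ring
      _ = (C * mq ^ 2) * (mq⁻¹ * mq⁻¹) := by ring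
      _ = vq * mq⁻¹ * (vq * mq⁻¹) := by rw [← hz]; ring
  have hv : ((v : ZMod q)) = 0 := by
    have : ((v : ZMod q)) ^ 2 = 0 := by rw [hz, hm]; ring
    exact pow_eq_zero_iff (two_ne_zero) |>.mp this
  have hvd : (q : ℤ) ∣ v := (ZMod.intCast_zmod_eq_zero_iff_dvd _ _).mp hv
  have hmd : (q : ℤ) ∣ m := (ZMod.intCast_zmod_eq_zero_iff_dvd _ _).mp hm
  refine ⟨hvd, ?_, hmd⟩
  -- q divides t
  obtain ⟨f1, rfl⟩ := hqf
  have hqf1 : ¬ (q : ℤ) ∣ f1 := fun ⟨c, hc⟩ => hq2f ⟨c, by rw [hc]; ring⟩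
  have hsq : ((q : ℤ) * q) ∣ (q : ℤ) * f1 * t ^ 2 := by
    have h1 : (q : ℤ) * f1 * t ^ 2 = C * m ^ 2 - v ^ 2 := by linarith
    rw [h1]
    obtain ⟨v0, rfl⟩ := hvd
    obtain ⟨m0, rfl⟩ := hmd
    exact ⟨C * m0 ^ 2 - v0 ^ 2, by ring⟩
  have : (q : ℤ) ∣ f1 * t ^ 2 := by
    obtain ⟨c, hc⟩ := hsq
    refine ⟨c, mul_left_cancel₀ hqp.ne_zero ?_⟩
    rw [← mul_assoc, hc]; ring
  have : (q : ℤ) ∣ t ^ 2 := (hqp.dvd_mul.mp this).resolve_left hqf1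
  exact hqp.dvd_of_dvd_pow this

lemma stepB (q : ℕ) (hq : q.Prime) {f : ℤ} (hf : ¬ IsSquare ((-f : ZMod q))) :
    ∀ v t m : ℤ, v ^ 2 + f * t ^ 2 = (q : ℤ) * m ^ 2 →
      (q : ℤ) ∣ v ∧ (q : ℤ) ∣ t ∧ (q : ℤ) ∣ m := by
  haveI : Fact q.Prime := ⟨hq⟩
  have hqp : Prime (q : ℤ) := Nat.prime_iff_prime_int.mp hq
  intro v t m h
  have hz : ((v : ZMod q)) ^ 2 + (f : ZMod q) * (t : ZMod q) ^ 2 = 0 := by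
    have := congrArg (fun z : ℤ => (z : ZMod q)) h
    push_cast at this
    rw [ZMod.natCast_self] at this
    ring_nf at this ⊢
    linear_combination this
  have ht : ((t : ZMod q)) = 0 := by
    by_contra ht0
    apply hf
    exact ⟨(v : ZMod q) * (t : ZMod q)⁻¹, by
      field_simp
      linear_combination -hz⟩
  have hv : ((v : ZMod q)) = 0 := by
    have : ((v : ZMod q)) ^ 2 = 0 := by rw [← hz, ht]; ring
    exact pow_eq_zero_iff (two_ne_zero) |>.mp this
  have hvd : (q : ℤ) ∣ v := (ZMod.intCast_zmod_eq_zero_iff_dvd _ _).mp hv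
  have htd : (q : ℤ) ∣ t := (ZMod.intCast_zmod_eq_zero_iff_dvd _ _).mp ht
  refine ⟨hvd, htd, ?_⟩
  have hsq : ((q : ℤ) * q) ∣ (q : ℤ) * m ^ 2 := by
    rw [← h]
    obtain ⟨v0, rfl⟩ := hvd
    obtain ⟨t0, rfl⟩ := htd
    exact ⟨v0 ^ 2 + f * t0 ^ 2, by ring⟩
  have : (q : ℤ) ∣ m ^ 2 := by
    obtain ⟨c, hc⟩ := hsq
    refine ⟨c, mul_left_cancel₀ hqp.ne_zero ?_⟩
    rw [hc]; ring
  exact hqp.dvd_of_dvd_pow this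

lemma oddPrimeFactor (f : ℕ) (hsf : Squarefree f) (hf3 : 3 ≤ f) :
    ∃ q, q.Prime ∧ q ≠ 2 ∧ q ∣ f := by
  by_cases h2 : 2 ∣ f
  · obtain ⟨g, rfl⟩ := h2
    have hg2 : ¬ 2 ∣ g := by
      rintro ⟨c, rfl⟩
      exact Nat.prime_two.not_isUnit (hsf 2 ⟨c, by ring⟩)
    have hg3 : 3 ≤ g := by
      rcases Nat.lt_or_ge g 3 with h | h
      · interval_cases g <;> omega
      · exact h
    refine ⟨g.minFac, Nat.minFac_prime (by omega), ?_, Dvd.dvd.mul_left (Nat.minFac_dvd g) 2⟩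
    intro h
    exact hg2 (h ▸ Nat.minFac_dvd g)
  · refine ⟨f.minFac, Nat.minFac_prime (by omega), ?_, Nat.minFac_dvd f⟩
    intro h
    exact h2 (h ▸ Nat.minFac_dvd f)

lemma keyLemma (f : ℕ) (hsf : Squarefree f) (hf1 : 1 ≤ f) :
    ∃ (p : ℕ) (C : ℤ), p.Prime ∧ p ≤ max f 2 ∧ 2 ≤ C ∧ C ≤ (leastNonRes p : ℤ) ∧
      ∀ v t m : ℤ, v ^ 2 + (f : ℤ) * t ^ 2 = C * m ^ 2 → m = 0 := by
  rcases Nat.lt_or_ge f 3 with hf3 | hf3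
  · interval_cases f
    · -- f = 1
      refine ⟨2, 3, Nat.prime_two, by norm_num, by norm_num, by norm_num [leastNonRes], ?_⟩
      refine descent_aux 3 (by norm_num) (f := (1:ℤ)) (C := 3) ?_
      intro v t m h
      have := stepB 3 (by norm_num) (f := (1:ℤ)) (by decide) v t m (by push_cast; linarith)
      exact_mod_cast this
    · -- f = 2
      refine ⟨2, 5, Nat.prime_two, by norm_num, by norm_num, by norm_num [leastNonRes], ?_⟩
      refine descent_aux 5 (by norm_num) (f := (2:ℤ)) (C := 5) ?_
      intro v t m h
      have := stepB 5 (by norm_num) (f := (2:ℤ)) (by decide) v t m (by push_cast; linarith)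
      exact_mod_cast this
  · obtain ⟨q, hq, hq2, hqf⟩ := oddPrimeFactor f hsf hf3
    haveI : Fact q.Prime := ⟨hq⟩
    set S : Set ℕ := {n : ℕ | ¬ IsSquare ((n : ZMod q))} with hS
    have hSne : S.Nonempty := by
      obtain ⟨a, ha⟩ := FiniteField.exists_nonsquare (F := ZMod q)
        (by rw [ZMod.ringChar_zmod_n]; exact hq2)
      refine ⟨a.val, ?_⟩
      show ¬ IsSquare ((a.val : ZMod q))
      simpa using ha
    have hCmem : sInf S ∈ S := Nat.sInf_mem hSne
    have hC2 : 2 ≤ sInf S := by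
      have h0 : sInf S ≠ 0 := by
        intro h; apply hCmem; rw [h]; push_cast; exact IsSquare.zero
      have h1 : sInf S ≠ 1 := by
        intro h; apply hCmem; rw [h]; push_cast; exact IsSquare.one
      omega
    have hlnr : leastNonRes q = sInf S := by rw [leastNonRes, if_neg hq2]
    refine ⟨q, ((sInf S : ℕ) : ℤ), hq, le_max_of_le_left (Nat.le_of_dvd (by omega) hqf),
      by exact_mod_cast hC2, by rw [hlnr], ?_⟩
    refine descent_aux q hq.two_le ?_
    refine stepA q hq ?_ (Int.natCast_dvd_natCast.mpr hqf) ?_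
    · push_cast
      exact hCmem
    · intro h
      have : (((q * q : ℕ) : ℤ)) ∣ ((f : ℕ) : ℤ) := by push_cast; exact h
      exact hq.not_isUnit (hsf q (Int.natCast_dvd_natCast.mp this))

lemma psd_to_pd {n : Type*} [Fintype n] [DecidableEq n] {A : Matrix n n ℝ}
    (h : A.PosSemidef) (hdet : A.det ≠ 0) : A.PosDef := by
  refine Matrix.PosDef.of_dotProduct_mulVec_pos (Matrix.posSemidef_iff_dotProduct_mulVec.mp h).1 (fun x hx => ?_)
  rcases (h.dotProduct_mulVec_nonneg x).lt_or_eq with hlt | heq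
  · exact hlt
  · exfalso
    have h0 : A.mulVec x = 0 := (h.dotProduct_mulVec_zero_iff x).mp heq.symm
    have hU : IsUnit A := (Matrix.isUnit_iff_isUnit_det A).mpr (isUnit_iff_ne_zero.mpr hdet)
    have hinj := Matrix.mulVec_injective_iff_isUnit.mpr hU
    exact hx (hinj (by rw [h0, Matrix.mulVec_zero]))

lemma detB (m11 m12 m22 c : ℤ) (v : Matrix (Fin 2) (Fin 1) ℤ) :
    (Matrix.fromBlocks !![m11, m12; m12, m22] v v.transpose
        (Matrix.of fun _ _ => c)).det
      = c * (m11 * m22 - m12 ^ 2)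
        - (m22 * (v 0 0) ^ 2 - 2 * m12 * (v 0 0) * (v 1 0) + m11 * (v 1 0) ^ 2) := by
  rw [← Matrix.det_reindex_self finSumFinEquiv]
  have h : (Matrix.reindex finSumFinEquiv finSumFinEquiv
      (Matrix.fromBlocks !![m11, m12; m12, m22] v v.transpose (Matrix.of fun _ _ => c)))
      = !![m11, m12, v 0 0; m12, m22, v 1 0; v 0 0, v 1 0, c] := by
    ext i j
    fin_cases i <;> fin_cases j <;> rfl
  rw [h, Matrix.det_fin_three]
  simp [Matrix.cons_val_zero, Matrix.cons_val_one]
  ring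

/-- Let `M = [[m₁₁,m₁₂],[m₁₂,m₂₂]]` be a positive definite 2×2 integer matrix different
from the identity.  Then there exist a prime `p ≤ m₁₁·m₂₂` and an integer `C` with
`2 ≤ C ≤ γ_p` such that every positive semidefinite integer matrix of block form
`[[M, v],[vᵀ, C·m₁₁]]` is in fact positive definite. -/
theorem stmt14 (m11 m12 m22 : ℤ)
    (hpd : ((!![m11, m12; m12, m22]).map (Int.cast : ℤ → ℝ)).PosDef)
    (hne : !![m11, m12; m12, m22] ≠ (1 : Matrix (Fin 2) (Fin 2) ℤ)) :
    ∃ (p : ℕ) (C : ℤ), p.Prime ∧ (p : ℤ) ≤ m11 * m22 ∧ 2 ≤ C ∧ C ≤ (leastNonRes p : ℤ) ∧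
      ∀ (v : Matrix (Fin 2) (Fin 1) ℤ),
        (((Matrix.fromBlocks !![m11, m12; m12, m22] v v.transpose
            (Matrix.of fun _ _ => C * m11)).map (Int.cast : ℤ → ℝ)).PosSemidef) →
        (((Matrix.fromBlocks !![m11, m12; m12, m22] v v.transpose
            (Matrix.of fun _ _ => C * m11)).map (Int.cast : ℤ → ℝ)).PosDef) := by
  have hm11 : 0 < m11 := by
    have h1 := hpd.dotProduct_mulVec_pos (x := ![1, 0]) (by
      intro h
      have := congrFun h 0
      simp at this)
    simp [Matrix.mulVec, dotProduct, Fin.sum_univ_two, Matrix.map_apply] at h1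
    exact_mod_cast h1
  have hd : 0 < m11 * m22 - m12 ^ 2 := by
    have h := hpd.det_pos
    rw [show ((!![m11, m12; m12, m22]).map (Int.cast : ℤ → ℝ))
        = (!![m11, m12; m12, m22]).map ⇑(Int.castRingHom ℝ) from rfl,
      ← RingHom.mapMatrix_apply, ← RingHom.map_det] at h
    rw [Matrix.det_fin_two_of] at h
    have h' : (0:ℝ) < ((m11 * m22 - m12 * m12 : ℤ) : ℝ) := h
    have h2 : (0:ℤ) < m11 * m22 - m12 * m12 := by exact_mod_cast h'
    nlinarith [h2]
  have hm22 : 0 < m22 := by nlinarith [sq_nonneg m12]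
  have h2le : 2 ≤ m11 * m22 := by
    by_contra hcon
    push_neg at hcon
    have h1 : m11 * m22 = 1 := by nlinarith [sq_nonneg m12]
    have h12 : m12 = 0 := by nlinarith [sq_nonneg m12]
    have hm111 : m11 = 1 := by nlinarith
    have hm221 : m22 = 1 := by nlinarith
    exact hne (by rw [hm111, hm221, h12, Matrix.one_fin_two])
  set d : ℤ := m11 * m22 - m12 ^ 2 with hdd
  obtain ⟨f, e, hfe, hsf⟩ := Nat.sq_mul_squarefree d.toNat
  have hdtoNat : ((d.toNat : ℤ)) = d := Int.toNat_of_nonneg hd.le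
  have hdef : d = (e : ℤ) ^ 2 * (f : ℤ) := by
    have := congrArg (Nat.cast : ℕ → ℤ) hfe
    push_cast at this
    rw [hdtoNat] at this
    linarith
  have hf0 : (f : ℤ) ≠ 0 := by
    intro h
    rw [h, mul_zero] at hdef
    omega
  have he0 : (e : ℤ) ≠ 0 := by
    intro h
    rw [h] at hdef
    simp at hdef
    omega
  have hf1 : 1 ≤ f := by
    rcases Nat.eq_zero_or_pos f with h | h
    · exact absurd (by exact_mod_cast h : (f:ℤ) = 0) hf0
    · exact h
  obtain ⟨p, C, hp, hpb, hC2, hCle, hdesc⟩ := keyLemma f hsf hf1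
  have hfled : (f : ℤ) ≤ d := by
    have he0' : 0 < e ^ 2 := Nat.pos_of_ne_zero (by
      intro h
      apply he0
      have : e = 0 := by
        rcases Nat.eq_zero_or_pos e with h' | h'
        · exact h'
        · exact absurd h (by positivity)
      exact_mod_cast this
      )
    have h1 : f ≤ e ^ 2 * f := Nat.le_mul_of_pos_left f he0'
    rw [hfe] at h1
    calc (f : ℤ) ≤ (d.toNat : ℤ) := by exact_mod_cast h1
      _ = d := hdtoNat
  refine ⟨p, C, hp, ?_, hC2, hCle, ?_⟩
  · have h1 : (p : ℤ) ≤ ((max f 2 : ℕ) : ℤ) := by exact_mod_cast hpb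
    have h2 : ((max f 2 : ℕ) : ℤ) ≤ m11 * m22 := by
      push_cast [Nat.cast_max]
      apply max_le
      · nlinarith [sq_nonneg m12]
      · exact h2le
    linarith
  · intro v hv
    apply psd_to_pd hv
    rw [show ((Matrix.fromBlocks !![m11, m12; m12, m22] v v.transpose
          (Matrix.of fun _ _ => C * m11)).map (Int.cast : ℤ → ℝ))
        = ((Int.castRingHom ℝ).mapMatrix (Matrix.fromBlocks !![m11, m12; m12, m22] v
          v.transpose (Matrix.of fun _ _ => C * m11))) from rfl, ← RingHom.map_det]
    simp only [Int.castRingHom, RingHom.coe_mk, MonoidHom.coe_mk, OneHom.coe_mk, ne_eq,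
      Int.cast_eq_zero]
    intro h0
    rw [detB] at h0
    set v1 : ℤ := v 0 0 with hv1
    set v2 : ℤ := v 1 0 with hv2
    -- key identity
    have hx : (m11 * v2 - m12 * v1) ^ 2 + d * v1 ^ 2 = C * m11 * d * m11 := by
      linear_combination -m11 * h0
    have hx2 : (m11 * v2 - m12 * v1) ^ 2 = (e : ℤ) ^ 2 * ((f : ℤ) * (C * m11 ^ 2 - v1 ^ 2)) := by
      rw [hdef] at hx
      linear_combination hx
    have hex : (e : ℤ) ∣ (m11 * v2 - m12 * v1) := by
      have h2 : (e : ℤ) ^ 2 ∣ (m11 * v2 - m12 * v1) ^ 2 := ⟨_, hx2⟩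
      exact (Int.pow_dvd_pow_iff two_ne_zero).mp h2
    obtain ⟨y, hy⟩ := hex
    have hy2 : y ^ 2 = (f : ℤ) * (C * m11 ^ 2 - v1 ^ 2) := by
      apply mul_left_cancel₀ (pow_ne_zero 2 he0)
      rw [← mul_pow, ← hy, hx2]
    have hsfZ : Squarefree ((f : ℕ) : ℤ) := Int.squarefree_natCast.mpr hsf
    have hfy : (f : ℤ) ∣ y := (hsfZ.dvd_pow_iff_dvd two_ne_zero).mp ⟨_, hy2⟩
    obtain ⟨z, hz⟩ := hfy
    have hs : v1 ^ 2 + (f : ℤ) * z ^ 2 = C * m11 ^ 2 := by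
      have h3 : (f : ℤ) * (C * m11 ^ 2 - v1 ^ 2) = (f : ℤ) * ((f : ℤ) * z ^ 2) := by
        rw [← hy2, hz]; ring
      have h4 := mul_left_cancel₀ hf0 h3
      linarith
    have := hdesc v1 z m11 hs
    omega
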